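/- arXiv:1409.2190 — 5 statements merged into one kernel-verified Lean document; each statement's English description precedes it below -/
import Mathlib

section
/- Let n ≥ 2, let χ and χ̄ be real symmetric (n−1)×(n−1) matrices, and let r ≥ 1, s ≥ 0 be integers with r+s ≤ n−1. Then the directional derivative at t = 0 of t ↦ P_{r,s}(χ + t·I, χ̄) equals (r·(n−(r+s))/(r+s))·P_{r−1,s}(χ,χ̄). -/
open Matrix

open Polynomial

lemma aux_coeff_one_add_C_mul_X_pow {R : Type*} [CommRing R] (c : R) (N d : ℕ) :
    ((1 + C c * X) ^ N).coeff d = (N.choose d : R) * c ^ d := by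
  rw [add_comm, add_pow]
  rw [Polynomial.finset_sum_coeff]
  have hterm : ∀ i ∈ Finset.range (N + 1),
      ((C c * X) ^ i * 1 ^ (N - i) * (N.choose i : R[X])).coeff d
        = if i = d then (N.choose d : R) * c ^ d else 0 := by
    intro i _
    rw [one_pow, mul_one, mul_pow, ← C_pow, ← Polynomial.C_eq_natCast, mul_comm (C (c^i)) (X ^ i),
      mul_assoc, ← Polynomial.C_mul, coeff_X_pow_mul']
    rw [Polynomial.coeff_C]
    by_cases h : i = d
    · subst h
      simp only [if_pos rfl, if_pos (le_refl i), Nat.sub_self, mul_comm]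
    · rw [if_neg h]
      by_cases h1 : i ≤ d
      · rw [if_pos h1, if_neg (by omega : ¬ d - i = 0)]
      · rw [if_neg h1]
  rw [Finset.sum_congr rfl hterm]
  by_cases hd : d ≤ N
  · rw [Finset.sum_ite_eq' (Finset.range (N+1)) d]
    simp [Nat.lt_succ_of_le hd]
  · rw [Finset.sum_ite_eq' (Finset.range (N+1)) d]
    push_neg at hd
    simp [Nat.lt_succ_iff, Nat.not_le.mpr hd, Nat.choose_eq_zero_of_lt hd]

-- evaluation of det(1 + X • M.map C)
lemma aux_eval_det {m : ℕ} {R : Type*} [CommRing R] (M : Matrix (Fin m) (Fin m) R) (a : R) :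
    eval a (Matrix.det (1 + (X : R[X]) • M.map C)) = Matrix.det (1 + a • M) := by
  rw [show eval a (Matrix.det (1 + (X : R[X]) • M.map C))
      = (evalRingHom a) (Matrix.det (1 + (X : R[X]) • M.map C)) from rfl,
    RingHom.map_det]
  congr 1
  ext i j
  simp [Matrix.map_apply, Matrix.add_apply, Matrix.smul_apply, Matrix.one_apply, smul_eq_mul]
  split_ifs <;> simp [mul_comm]

lemma aux_natDegree_det_le' {m : ℕ} {R : Type*} [CommRing R]
    (N : Matrix (Fin m) (Fin m) R[X]) (h : ∀ i j, (N i j).natDegree ≤ 1) :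
    N.det.natDegree ≤ m := by
  rw [Matrix.det_apply']
  refine Polynomial.natDegree_sum_le_of_forall_le _ _ fun σ _ => ?_
  refine (Polynomial.natDegree_mul_le).trans ?_
  have h1 : ((Equiv.Perm.sign σ : ℤ) : R[X]).natDegree = 0 := Polynomial.natDegree_intCast _
  have h2 : (∏ i, N (σ i) i).natDegree ≤ m := by
    refine (Polynomial.natDegree_prod_le _ _).trans ?_
    calc (∑ i, (N (σ i) i).natDegree) ≤ ∑ _i : Fin m, 1 :=
          Finset.sum_le_sum fun i _ => h _ _
      _ = m := by simp
  omega

lemma aux_natDegree_one_add_X_smul {m : ℕ} {R : Type*} [CommRing R]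
    (M : Matrix (Fin m) (Fin m) R) :
    (Matrix.det (1 + (X : R[X]) • M.map C)).natDegree ≤ m := by
  refine aux_natDegree_det_le' _ fun i j => ?_
  simp only [Matrix.add_apply, Matrix.smul_apply, Matrix.map_apply, Matrix.one_apply,
    smul_eq_mul]
  refine (Polynomial.natDegree_add_le _ _).trans ?_
  have h1 : (if i = j then (1:R[X]) else 0).natDegree = 0 := by split_ifs <;> simp
  have h2 : ((X : R[X]) * C (M i j)).natDegree ≤ 1 := by
    refine (Polynomial.natDegree_mul_le).trans ?_
    have := Polynomial.natDegree_X_le (R := R)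
    have := Polynomial.natDegree_C (M i j)
    omega
  omega

lemma aux_real_key {m : ℕ} (V : Matrix (Fin m) (Fin m) ℝ) (t : ℝ) :
    Matrix.det (1 + (X : ℝ[X]) • (V + t • (1 : Matrix (Fin m) (Fin m) ℝ)).map C) =
      ∑ j ∈ Finset.range (m+1),
        C ((Matrix.det (1 + (X : ℝ[X]) • V.map C)).coeff j) * X ^ j
          * (1 + C t * X) ^ (m - j) := by
  apply Polynomial.eq_of_infinite_eval_eq
  have hsub : {a : ℝ | 1 + t * a ≠ 0} ⊆
      {a : ℝ | eval a (Matrix.det (1 + (X : ℝ[X]) • (V + t • 1).map C)) =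
        eval a (∑ j ∈ Finset.range (m+1),
          C ((Matrix.det (1 + (X : ℝ[X]) • V.map C)).coeff j) * X ^ j
            * (1 + C t * X) ^ (m - j))} := by
    intro a ha
    simp only [Set.mem_setOf_eq] at ha ⊢
    set u : ℝ := 1 + t * a with hu
    -- LHS
    rw [aux_eval_det]
    have hmat : (1 : Matrix (Fin m) (Fin m) ℝ) + a • (V + t • 1)
        = u • (1 + (a / u) • V) := by
      ext i j
      simp only [Matrix.add_apply, Matrix.smul_apply, Matrix.one_apply, smul_eq_mul]
      split_ifs <;> field_simp <;> ring
    rw [hmat, Matrix.det_smul, ← aux_eval_det,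
      Polynomial.eval_eq_sum_range' (Nat.lt_succ_of_le (aux_natDegree_one_add_X_smul V))]
    -- RHS
    rw [Polynomial.eval_finset_sum]
    simp only [eval_mul, eval_pow, eval_C, eval_X, eval_add, eval_one]
    rw [Finset.mul_sum]
    refine Finset.sum_congr rfl fun j hj => ?_
    have hjm : j ≤ m := Nat.lt_succ_iff.mp (Finset.mem_range.mp hj)
    have hupow : u ^ j * u ^ (m - j) = u ^ m := pow_mul_pow_sub u hjm
    have hune : u ≠ 0 := ha
    field_simp
    ring_nf
    rw [Fintype.card_fin, ← hupow, show (1 + a * t) = u by rw [hu]; ring, inv_pow]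
    field_simp
  refine Set.Infinite.mono hsub ?_
  have hfin : ({a : ℝ | 1 + t * a ≠ 0}ᶜ).Finite := by
    by_cases ht : t = 0
    · simp [ht]
    · have : {a : ℝ | 1 + t * a ≠ 0}ᶜ ⊆ {-(1/t)} := by
        intro a ha
        simp only [Set.mem_compl_iff, Set.mem_setOf_eq, not_not] at ha
        simp only [Set.mem_singleton_iff]
        field_simp
        linarith
      exact Set.Finite.subset (Set.finite_singleton _) this
  simpa using hfin.infinite_compl

noncomputable def psiH : Polynomial ℝ →+* Polynomial (Polynomial ℝ) :=
  eval₂RingHom ((C : Polynomial ℝ →+* Polynomial (Polynomial ℝ)).comp (C : ℝ →+* Polynomial ℝ))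
    ((X : Polynomial (Polynomial ℝ)) * C X)

noncomputable def phiH : Polynomial (Polynomial ℝ) →+* Polynomial (Polynomial ℝ) :=
  eval₂RingHom psiH (X : Polynomial (Polynomial ℝ))

lemma phiH_monomial (n b : ℕ) (x : ℝ) :
    phiH (monomial n (monomial b x)) = monomial (n + b) (monomial b x) := by
  unfold phiH psiH
  rw [coe_eval₂RingHom, eval₂_monomial, coe_eval₂RingHom, eval₂_monomial]
  rw [mul_pow, ← Polynomial.C_pow, ← Polynomial.C_mul_X_pow_eq_monomial,
    ← Polynomial.C_mul_X_pow_eq_monomial, Polynomial.C_mul]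
  simp only [RingHom.coe_comp, Function.comp_apply]
  ring

lemma phiH_coeff (P : Polynomial (Polynomial ℝ)) (k s : ℕ) (hs : s ≤ k) :
    ((phiH P).coeff k).coeff s = (P.coeff (k - s)).coeff s := by
  induction P using Polynomial.induction_on' with
  | add p q hp hq => simp [map_add, hp, hq]
  | monomial n q =>
    induction q using Polynomial.induction_on' with
    | add p' q' hp' hq' =>
      have : (monomial n) (p' + q') = monomial n p' + monomial n q' := by
        rw [map_add]
      rw [this, map_add]
      simp only [Polynomial.coeff_add, hp', hq']
    | monomial b x =>
      rw [phiH_monomial]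
      simp only [Polynomial.coeff_monomial]
      by_cases hb : b = s
      · subst hb
        by_cases hnk : n + b = k
        · rw [if_pos hnk, if_pos (by omega)]
        · rw [if_neg hnk, if_neg (by omega)]
      · split_ifs <;> simp [Polynomial.coeff_monomial, hb]

lemma phiH_X : phiH X = X := eval₂_X _ _
lemma phiH_C (p : Polynomial ℝ) : phiH (C p) = psiH p := eval₂_C _ _
lemma psiH_C (a : ℝ) : psiH (C a) = C (C a) := eval₂_C _ _
lemma psiH_X : psiH X = X * C X := eval₂_X _ _

noncomputable def Wmat {m : ℕ} (χ χb : Matrix (Fin m) (Fin m) ℝ) (t : ℝ) :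
    Matrix (Fin m) (Fin m) (Polynomial ℝ) :=
  χ.map C + (X : Polynomial ℝ) • χb.map C + (C t) • 1

noncomputable def Qp {m : ℕ} (χ χb : Matrix (Fin m) (Fin m) ℝ) (t : ℝ) :
    Polynomial (Polynomial ℝ) :=
  Matrix.det (1 + (X : Polynomial (Polynomial ℝ)) • (Wmat χ χb t).map C)

lemma lemA {m : ℕ} (χ χb : Matrix (Fin m) (Fin m) ℝ) (t : ℝ) :
    phiH (Matrix.det ((1 : Matrix (Fin m) (Fin m) (Polynomial (Polynomial ℝ)))
        + (X : Polynomial (Polynomial ℝ)) •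
            (χ + t • 1).map (fun a => C (C a))
        + (C X : Polynomial (Polynomial ℝ)) •
            χb.map (fun a => C (C a)))) = Qp χ χb t := by
  rw [RingHom.map_det]
  unfold Qp
  congr 1
  apply Matrix.ext
  intro i j
  simp only [RingHom.mapMatrix_apply, Matrix.map_apply, Matrix.add_apply, Matrix.smul_apply,
    Matrix.one_apply, smul_eq_mul, _root_.map_add, _root_.map_mul, phiH_X, phiH_C, psiH_C,
    psiH_X, Wmat, apply_ite phiH, _root_.map_one, _root_.map_zero, Polynomial.C_add,
    Polynomial.C_mul]
  split_ifs <;> simp [_root_.map_one, _root_.map_zero] <;> ring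

lemma lemB {m : ℕ} (χ χb : Matrix (Fin m) (Fin m) ℝ) (b t : ℝ) :
    (Qp χ χb t).map (evalRingHom b) =
      Matrix.det (1 + (X : Polynomial ℝ) •
        ((χ + b • χb) + t • (1 : Matrix (Fin m) (Fin m) ℝ)).map C) := by
  unfold Qp
  rw [show Polynomial.map (evalRingHom b) = ⇑(mapRingHom (evalRingHom b)) from rfl,
    RingHom.map_det]
  congr 1
  apply Matrix.ext
  intro i j
  simp only [RingHom.mapMatrix_apply, Matrix.map_apply, Matrix.add_apply, Matrix.smul_apply,
    Matrix.one_apply, smul_eq_mul, coe_mapRingHom, Polynomial.map_add, Polynomial.map_mul,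
    Polynomial.map_one, Polynomial.map_zero, Polynomial.map_X, Polynomial.map_C, Wmat,
    eval_add, eval_mul, eval_C, eval_X, coe_evalRingHom]
  split_ifs <;> simp

lemma nested_funext {q1 q2 : Polynomial (Polynomial ℝ)}
    (h : ∀ b : ℝ, q1.map (evalRingHom b) = q2.map (evalRingHom b)) : q1 = q2 := by
  ext k : 1
  apply Polynomial.funext
  intro b
  have := congrArg (fun p => Polynomial.coeff p k) (h b)
  simpa [Polynomial.coeff_map] using this

lemma Qp_expand {m : ℕ} (χ χb : Matrix (Fin m) (Fin m) ℝ) (t : ℝ) :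
    Qp χ χb t = ∑ j ∈ Finset.range (m+1),
      C ((Qp χ χb 0).coeff j) * X ^ j * (1 + C (C t) * X) ^ (m - j) := by
  apply nested_funext
  intro b
  rw [lemB]
  rw [aux_real_key (χ + b • χb) t]
  rw [Polynomial.map_sum]
  refine Finset.sum_congr rfl fun j hj => ?_
  rw [Polynomial.map_mul, Polynomial.map_mul, Polynomial.map_pow, Polynomial.map_pow,
    Polynomial.map_add, Polynomial.map_one, Polynomial.map_mul, Polynomial.map_C,
    Polynomial.map_X, Polynomial.map_C]
  have h0 : (Qp χ χb 0).map (evalRingHom b)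
      = Matrix.det (1 + (X : Polynomial ℝ) • (χ + b • χb).map C) := by
    rw [lemB]
    congr 2
    simp
  have hc : evalRingHom b ((Qp χ χb 0).coeff j)
      = (Matrix.det (1 + (X : Polynomial ℝ) • (χ + b • χb).map C)).coeff j := by
    rw [← h0, Polynomial.coeff_map]
  rw [hc]
  simp [eval_C]

lemma Qp_coeff {m : ℕ} (χ χb : Matrix (Fin m) (Fin m) ℝ) (t : ℝ) (K s : ℕ) (hK : K ≤ m) :
    ((Qp χ χb t).coeff K).coeff s
      = ∑ j ∈ Finset.range (K+1),
          ((m-j).choose (K-j) : ℝ) * t^(K-j) * (((Qp χ χb 0).coeff j).coeff s) := by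
  rw [Qp_expand χ χb t, Polynomial.finset_sum_coeff]
  have hterm : ∀ j ∈ Finset.range (m+1),
      (C ((Qp χ χb 0).coeff j) * X ^ j * (1 + C (C t) * X) ^ (m - j)).coeff K
        = if j ≤ K then
            C (((m-j).choose (K-j) : ℝ) * t^(K-j)) * ((Qp χ χb 0).coeff j) else 0 := by
    intro j _
    rw [mul_right_comm, coeff_mul_X_pow']
    split_ifs with h
    · rw [Polynomial.coeff_C_mul, aux_coeff_one_add_C_mul_X_pow, ← Polynomial.C_pow,
        ← Polynomial.C_eq_natCast, ← Polynomial.C_mul, mul_comm]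
    · rfl
  rw [Finset.sum_congr rfl hterm, ← Finset.sum_filter]
  have hfil : (Finset.range (m+1)).filter (fun j => j ≤ K) = Finset.range (K+1) := by
    ext x
    simp only [Finset.mem_filter, Finset.mem_range]
    omega
  rw [hfil, Polynomial.finset_sum_coeff]
  refine Finset.sum_congr rfl fun j hj => ?_
  rw [Polynomial.coeff_C_mul]


/-- `sigmaM k W` is the `k`-th elementary symmetric function of (the eigenvalues of) `W`,
defined as the coefficient of `x^k` in `det (I + x • W)`. -/
noncomputable def sigmaM {m : ℕ} {R : Type*} [CommRing R] (k : ℕ)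
    (W : Matrix (Fin m) (Fin m) R) : R :=
  ((1 + (Polynomial.X : Polynomial R) • W.map Polynomial.C).det).coeff k

/-- The mixed higher order mean curvature `P_{r,s}(χ, χ̄)`, defined as
`(r! s! / (r+s)!)` times the coefficient of `y^r ȳ^s` in `det (I + y • χ + ȳ • χ̄)`. -/
noncomputable def mixedP {m : ℕ} (r s : ℕ) (χ χb : Matrix (Fin m) (Fin m) ℝ) : ℝ :=
  ((Nat.factorial r * Nat.factorial s : ℝ) / (Nat.factorial (r + s) : ℝ)) *
    ((((1 : Matrix (Fin m) (Fin m) (Polynomial (Polynomial ℝ)))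
        + (Polynomial.X : Polynomial (Polynomial ℝ)) •
            χ.map (fun a => Polynomial.C (Polynomial.C a))
        + (Polynomial.C Polynomial.X : Polynomial (Polynomial ℝ)) •
            χb.map (fun a => Polynomial.C (Polynomial.C a))).det).coeff r).coeff s

/-- the directional derivative of `P_{r,s}` at `χ` in the direction of the
identity matrix equals `(r (n-(r+s))/(r+s)) · P_{r-1,s}(χ,χ̄)`. -/
theorem statement2 (n r s : ℕ) (hn : 2 ≤ n) (hr : 1 ≤ r)
    (χ χb : Matrix (Fin (n-1)) (Fin (n-1)) ℝ) (hχ : χ.IsSymm) (hχb : χb.IsSymm)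
    (hrs : r + s ≤ n - 1) :
    deriv (fun t : ℝ =>
        mixedP r s (χ + t • (1 : Matrix (Fin (n-1)) (Fin (n-1)) ℝ)) χb) 0 =
      (r : ℝ) * ((n : ℝ) - ((r : ℝ) + (s : ℝ))) / ((r : ℝ) + (s : ℝ)) *
        mixedP (r-1) s χ χb := by
  set K := r + s with hKdef
  have hK1 : 1 ≤ K := by omega
  have hKm : K ≤ n - 1 := hrs
  set a : ℕ → ℝ := fun j => ((Qp χ χb 0).coeff j).coeff s with ha
  set κ : ℝ := ((Nat.factorial r * Nat.factorial s : ℝ) / (Nat.factorial K : ℝ)) with hκ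
  set g : ℝ → ℝ := fun t => ∑ j ∈ Finset.range (K+1),
      (((n-1)-j).choose (K-j) : ℝ) * t^(K-j) * a j with hg
  -- Step 1: the function equals κ * g
  have h1 : ∀ t : ℝ, mixedP r s (χ + t • 1) χb = κ * g t := by
    intro t
    unfold mixedP
    congr 1
    have hφ := phiH_coeff ((1 + (X : Polynomial (Polynomial ℝ)) •
        (χ + t • 1).map (fun a => C (C a))
        + (C X : Polynomial (Polynomial ℝ)) • χb.map (fun a => C (C a))).det) K s (by omega)
    rw [show K - s = r from by omega] at hφ
    rw [← hφ, lemA χ χb t, Qp_coeff χ χb t K s hKm]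
  -- Step 2: RHS mixedP in terms of a (K-1)
  have h2 : mixedP (r-1) s χ χb
      = ((Nat.factorial (r-1) * Nat.factorial s : ℝ) / (Nat.factorial (K-1) : ℝ)) * a (K-1) := by
    unfold mixedP
    rw [show (r-1) + s = K - 1 from by omega]
    congr 1
    have h0 : χ + (0:ℝ) • (1 : Matrix (Fin (n-1)) (Fin (n-1)) ℝ) = χ := by simp
    rw [← h0]
    have hφ := phiH_coeff ((1 + (X : Polynomial (Polynomial ℝ)) •
        (χ + (0:ℝ) • 1).map (fun a => C (C a))
        + (C X : Polynomial (Polynomial ℝ)) • χb.map (fun a => C (C a))).det) (K-1) s (by omega)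
    rw [show K - 1 - s = r - 1 from by omega] at hφ
    rw [← hφ, lemA χ χb 0]
  -- Step 3: derivative of g at 0
  have hgd : HasDerivAt g (∑ j ∈ Finset.range (K+1),
      (((n-1)-j).choose (K-j) : ℝ) * (((K-j) : ℕ) * (0:ℝ)^(K-j-1)) * a j) 0 := by
    apply HasDerivAt.fun_sum
    intro j _
    exact ((hasDerivAt_pow (K-j) (0:ℝ)).const_mul _).mul_const _
  have hsum : (∑ j ∈ Finset.range (K+1),
      (((n-1)-j).choose (K-j) : ℝ) * (((K-j) : ℕ) * (0:ℝ)^(K-j-1)) * a j)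
      = ((n : ℝ) - K) * a (K-1) := by
    rw [Finset.sum_eq_single (K-1)]
    · rw [show K - (K-1) = 1 from by omega]
      rw [Nat.choose_one_right]
      have hc : (((n-1) - (K-1) : ℕ) : ℝ) = (n : ℝ) - K := by
        rw [show (n-1) - (K-1) = n - K from by omega]
        rw [Nat.cast_sub (by omega)]
      rw [hc]
      norm_num
    · intro j hj hne
      rcases Nat.lt_or_ge j K with hlt | hge
      · have : K - j - 1 ≠ 0 := by
          simp only [Finset.mem_range] at hj
          omega
        rw [zero_pow this]
        ring
      · have : K - j = 0 := by omega
        rw [this]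
        norm_num
    · intro hmem
      exact absurd (Finset.mem_range.mpr (by omega)) hmem
  -- Step 4: compute the deriv
  have hfun : (fun t : ℝ => mixedP r s (χ + t • 1) χb) = fun t => κ * g t := funext h1
  rw [hfun]
  rw [(hgd.const_mul κ).deriv, hsum, h2]
  -- Step 5: arithmetic
  have hrf : (r : ℝ) * ((r-1).factorial : ℝ) = (r.factorial : ℝ) := by
    rw_mod_cast [Nat.mul_factorial_pred (by omega)]
  have hKf : (K : ℝ) * ((K-1).factorial : ℝ) = (K.factorial : ℝ) := by
    rw_mod_cast [Nat.mul_factorial_pred (by omega)]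
  have hrs' : (r : ℝ) + (s : ℝ) = (K : ℝ) := by push_cast [hKdef]; ring
  rw [hκ, hrs', ← hrf, ← hKf]
  have hK0 : (K : ℝ) ≠ 0 := Nat.cast_ne_zero.mpr (by omega)
  have hKf0 : ((K-1).factorial : ℝ) ≠ 0 := Nat.cast_ne_zero.mpr (Nat.factorial_ne_zero _)
  field_simp
end

section
/- Let n ≥ 3 and let s be an integer with 1 ≤ s ≤ n−2. Let χ and χ̄ be real symmetric (n−1)×(n−1) matrices both lying in the Gårding cone Γ_{s+1}, and suppose that tr(χ̄ · T̄_{0,s}(χ̄) · χ) ≥ (s/(n−1))·σ_s(χ̄)·tr(χ). Then (n−1−s)·σ_s(χ̄)·tr(χ) ≥ (n−1)·(s+1)·P_{1,s}(χ,χ̄). -/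
open Matrix

/-- A real symmetric matrix lies in the Gårding cone `Γ_k` iff the elementary symmetric
functions `σ_1, …, σ_k` of its eigenvalues are all positive. -/
def matGamma {m : ℕ} (k : ℕ) (W : Matrix (Fin m) (Fin m) ℝ) : Prop :=
  ∀ j : ℕ, 1 ≤ j → j ≤ k → 0 < sigmaM j W

section AuxLemmas
open Polynomial Matrix

variable {R : Type*} [CommRing R] {n : Type*} [Fintype n] [DecidableEq n]

lemma det_updateRow_eq_sum' (M : Matrix n n R) (j : n) (v : n → R) :
    (M.updateRow j v).det = ∑ i, v i * adjugate M i j := by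
  rw [← cramer_transpose_apply]
  have hv : v = ∑ i, (fun k => v i * Pi.single (M := fun _ => R) i 1 k) := by
    ext k
    simp [Pi.single_apply, eq_comm]
  conv_lhs => rw [hv]
  rw [map_sum]
  simp only [Finset.sum_apply]
  refine Finset.sum_congr rfl fun i _ => ?_
  have : (fun k => v i * Pi.single (M := fun _ => R) i 1 k)
      = v i • Pi.single (M := fun _ => R) i 1 := by
    ext k; simp
  rw [this, LinearMap.map_smul, Pi.smul_apply, smul_eq_mul, adjugate_apply,
    ← cramer_transpose_apply]

lemma coeff_one_det_add_X_smul (M N : Matrix n n R) :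
    (det (M.map (C : R → R[X]) + (X : R[X]) • N.map C)).coeff 1 = trace (N * adjugate M) := by
  classical
  have expand0 := MultilinearMap.map_add_univ
    ((detRowAlternating : (n → R[X]) [⋀^n]→ₗ[R[X]] R[X]).toMultilinearMap)
    (fun i => ((X : R[X]) • N.map C) i) (fun i => (M.map (C : R → R[X])) i)
  have hfun : ((fun i => ((X : R[X]) • N.map C) i) + fun i => (M.map (C : R → R[X])) i)
      = (M.map (C : R → R[X]) + (X : R[X]) • N.map C) := by
    funext i; exact add_comm _ _
  rw [hfun] at expand0
  have expand : (M.map (C : R → R[X]) + (X : R[X]) • N.map C).det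
      = ∑ s : Finset n,
        ((detRowAlternating : (n → R[X]) [⋀^n]→ₗ[R[X]] R[X]).toMultilinearMap)
          (s.piecewise (fun i => ((X : R[X]) • N.map C) i) (fun i => (M.map (C : R → R[X])) i)) :=
    expand0
  have key : ∀ s : Finset n,
      ((detRowAlternating : (n → R[X]) [⋀^n]→ₗ[R[X]] R[X]).toMultilinearMap)
        (s.piecewise (fun i => ((X : R[X]) • N.map C) i) (fun i => (M.map (C : R → R[X])) i))
      = (X : R[X]) ^ s.card *
          C ((Matrix.of (s.piecewise (fun i => N i) (fun i => M i))).det) := by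
    intro s
    set m0 : Matrix n n R := Matrix.of (s.piecewise (fun i => N i) (fun i => M i)) with hm0
    have h1 : s.piecewise (fun i => ((X : R[X]) • N.map C) i) (fun i => (M.map (C : R → R[X])) i)
        = s.piecewise (fun i => (X : R[X]) • (m0.map C) i) (fun i => (m0.map C) i) := by
      funext i
      by_cases hi : i ∈ s
      · rw [Finset.piecewise_eq_of_mem _ _ _ hi, Finset.piecewise_eq_of_mem _ _ _ hi]
        funext j
        simp [hm0, Matrix.map_apply, Finset.piecewise_eq_of_mem _ _ _ hi]
      · rw [Finset.piecewise_eq_of_notMem _ _ _ hi, Finset.piecewise_eq_of_notMem _ _ _ hi]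
        funext j
        simp [hm0, Matrix.map_apply, Finset.piecewise_eq_of_notMem _ _ _ hi]
    rw [h1]
    have h2 := MultilinearMap.map_piecewise_smul
      ((detRowAlternating : (n → R[X]) [⋀^n]→ₗ[R[X]] R[X]).toMultilinearMap)
      (fun _ : n => (X : R[X])) (fun i => (m0.map C) i) s
    rw [h2]
    have h3 : ((detRowAlternating : (n → R[X]) [⋀^n]→ₗ[R[X]] R[X]).toMultilinearMap)
        (fun i => (m0.map C) i) = (m0.map (C : R → R[X])).det := rfl
    rw [h3, Finset.prod_const, smul_eq_mul]
    have h4 : (m0.map (C : R → R[X])).det = C m0.det := by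
      rw [show m0.map (C : R → R[X]) = (C : R →+* R[X]).mapMatrix m0 from rfl, ← RingHom.map_det]
    rw [h4]
  rw [expand]
  simp only [key]
  rw [finset_sum_coeff]
  have hterm : ∀ s : Finset n,
      ((X : R[X]) ^ s.card * C ((Matrix.of (s.piecewise (fun i => N i) (fun i => M i))).det)).coeff 1
      = if s.card = 1 then (Matrix.of (s.piecewise (fun i => N i) (fun i => M i))).det else 0 := by
    intro s
    rw [mul_comm, coeff_C_mul, coeff_X_pow]
    by_cases h : s.card = 1 <;> simp [h, eq_comm]
  simp only [hterm]
  rw [← Finset.sum_filter]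
  have hset : (Finset.univ : Finset (Finset n)).filter (fun s => s.card = 1)
      = Finset.univ.image (fun j : n => ({j} : Finset n)) := by
    ext s
    simp [Finset.card_eq_one, eq_comm]
  rw [hset, Finset.sum_image (by intro a _ b _ h; simpa using h)]
  have hsing : ∀ j : n, (Matrix.of (({j} : Finset n).piecewise (fun i => N i) (fun i => M i)))
      = M.updateRow j (N j) := by
    intro j
    ext i k
    by_cases hij : i = j
    · subst hij
      simp [Finset.piecewise_eq_of_mem _ _ _ (Finset.mem_singleton_self i)]
    · rw [Matrix.updateRow_ne hij, Matrix.of_apply,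
        Finset.piecewise_eq_of_notMem _ _ _ (by simp [hij])]
  simp only [hsing]
  simp only [det_updateRow_eq_sum']
  rw [Matrix.trace]
  refine Finset.sum_congr rfl fun j _ => ?_
  rw [Matrix.diag_apply, Matrix.mul_apply]

lemma X_mul_cancel' {p q : R[X]} (h : (X : R[X]) * p = X * q) : p = q := by
  ext k
  have := congrArg (fun r => Polynomial.coeff r (k+1)) h
  simpa [coeff_X_mul] using this

omit [DecidableEq n] in
lemma trace_map' {S : Type*} [CommRing S] (A : Matrix n n R) (f : R →+* S) :
    trace (A.map f) = f (trace A) := by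
  simp only [Matrix.trace, Matrix.diag, Matrix.map_apply]
  rw [map_sum]

lemma adjugate_comm_X (A : Matrix n n R) :
    (A.map (C : R → R[X])) * adjugate (1 + (X : R[X]) • A.map C)
      = adjugate (1 + (X : R[X]) • A.map C) * (A.map C) := by
  set Ah := A.map (C : R → R[X]) with hA
  set M := 1 + (X : R[X]) • Ah with hM
  have h : M * adjugate M = adjugate M * M := by rw [mul_adjugate, adjugate_mul]
  have h2 : (X : R[X]) • (Ah * adjugate M) = (X : R[X]) • (adjugate M * Ah) := by
    rw [hM, add_mul, mul_add, one_mul, mul_one, smul_mul_assoc, mul_smul_comm] at h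
    exact add_left_cancel h
  refine Matrix.ext fun i j => ?_
  have h3 : (X : R[X]) * (Ah * adjugate M) i j = X * (adjugate M * Ah) i j := by
    have := congrArg (fun m => m i j) h2
    simpa [Matrix.smul_apply, smul_eq_mul] using this
  exact X_mul_cancel' h3

lemma adjugate_newton (A : Matrix n n R) :
    adjugate (1 + (X : R[X]) • A.map C)
      = (det (1 + (X : R[X]) • A.map C)) • (1 : Matrix n n R[X])
        - (X : R[X]) • (A.map C * adjugate (1 + (X : R[X]) • A.map C)) := by
  have h := mul_adjugate (1 + (X : R[X]) • A.map C)
  rw [add_mul, one_mul, smul_mul_assoc] at h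
  exact eq_sub_of_add_eq h

lemma keyA (A B : Matrix n n R) :
    (det ((1 + (X : R[X]) • A.map C).map (C : R[X] → (R[X])[X])
        + (X : (R[X])[X]) • (B.map (C : R → R[X])).map C)).coeff 1
      = C (trace B) * det (1 + (X : R[X]) • A.map C)
        - (X : R[X]) * trace (B.map C * A.map C * adjugate (1 + (X : R[X]) • A.map C)) := by
  rw [coeff_one_det_add_X_smul (1 + (X : R[X]) • A.map C) (B.map C)]
  conv_lhs => rw [adjugate_newton A]
  rw [mul_sub, mul_smul_comm, mul_one, mul_smul_comm, ← mul_assoc, trace_sub, trace_smul,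
    trace_smul, _root_.trace_map', smul_eq_mul, smul_eq_mul, mul_comm (det _)]

lemma keyB (A B : Matrix n n R) :
    (det ((1 + (X : R[X]) • A.map C).map (C : R[X] → (R[X])[X])
        + (X : (R[X])[X]) • ((B * A + A * B).map (C : R → R[X])).map C)).coeff 1
      = 2 * trace (B.map C * A.map C * adjugate (1 + (X : R[X]) • A.map C)) := by
  rw [coeff_one_det_add_X_smul (1 + (X : R[X]) • A.map C) ((B * A + A * B).map C)]
  have hmap : (B * A + A * B).map (C : R → R[X])
      = B.map C * A.map C + A.map C * B.map C := by
    have h0 : (B * A + A * B).map (C : R → R[X])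
        = (C : R →+* R[X]).mapMatrix (B * A + A * B) := rfl
    rw [h0, map_add, _root_.map_mul, _root_.map_mul]
    rfl
  rw [hmap, add_mul, trace_add]
  set Ah := A.map (C : R → R[X]) with hAh
  set Bh := B.map (C : R → R[X]) with hBh
  set adjM := adjugate (1 + (X : R[X]) • Ah) with hadj
  have hc : Ah * adjM = adjM * Ah := adjugate_comm_X A
  have e3 : trace (Ah * Bh * adjM) = trace (Bh * Ah * adjM) := by
    rw [mul_assoc, trace_mul_comm, mul_assoc, ← hc, ← mul_assoc]
  rw [e3, two_mul]

lemma deriv_sigmaM {m : ℕ} (k : ℕ) (hk : 1 ≤ k) (A B : Matrix (Fin m) (Fin m) ℝ) :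
    deriv (fun t : ℝ => sigmaM k (A + t • B)) 0
      = (((det ((1 + (X : Polynomial ℝ) • A.map C).map
            (C : Polynomial ℝ → Polynomial (Polynomial ℝ))
          + (X : Polynomial (Polynomial ℝ)) •
              (B.map (C : ℝ → Polynomial ℝ)).map C)).coeff 1).coeff (k-1)) := by
  classical
  set P : Polynomial (Polynomial ℝ) :=
    det ((1 + (X : Polynomial ℝ) • A.map C).map (C : Polynomial ℝ → Polynomial (Polynomial ℝ))
      + (X : Polynomial (Polynomial ℝ)) • (B.map (C : ℝ → Polynomial ℝ)).map C) with hP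
  have ha : ∀ t : ℝ, sigmaM k (A + t • B) = (Polynomial.eval (C t * X) P).coeff k := by
    intro t
    have hev : Polynomial.eval (C t * X) P
        = det (((1 + (X : Polynomial ℝ) • A.map C).map
            (C : Polynomial ℝ → Polynomial (Polynomial ℝ))
            + (X : Polynomial (Polynomial ℝ)) • (B.map (C : ℝ → Polynomial ℝ)).map C).map
              (Polynomial.evalRingHom (C t * X))) := by
      rw [hP, ← Polynomial.coe_evalRingHom, RingHom.map_det]
      rfl
    have hmat : (((1 + (X : Polynomial ℝ) • A.map C).map
            (C : Polynomial ℝ → Polynomial (Polynomial ℝ))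
            + (X : Polynomial (Polynomial ℝ)) • (B.map (C : ℝ → Polynomial ℝ)).map C).map
              (Polynomial.evalRingHom (C t * X)))
        = 1 + (X : Polynomial ℝ) • (A + t • B).map C := by
      refine Matrix.ext fun i j => ?_
      by_cases hij : i = j <;>
        simp only [Matrix.add_apply, Matrix.smul_apply, Matrix.map_apply, Matrix.one_apply, hij,
          if_true, if_false, smul_eq_mul, map_add, _root_.map_mul, _root_.map_one, map_zero,
          coe_evalRingHom, eval_C, eval_X, eval_mul, eval_add, eval_one, eval_zero] <;> ring
    rw [hev, hmat]
    rfl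
  have hb : ∀ t : ℝ, (Polynomial.eval (C t * X) P).coeff k
      = ∑ j ∈ P.support, ((P.coeff j * X ^ j).coeff k) * t ^ j := by
    intro t
    rw [Polynomial.eval_eq_sum, Polynomial.sum, finset_sum_coeff]
    refine Finset.sum_congr rfl fun j _ => ?_
    rw [mul_pow, ← Polynomial.C_pow, mul_left_comm, coeff_C_mul, mul_comm]
  have hfun : (fun t : ℝ => sigmaM k (A + t • B))
      = fun t : ℝ => ∑ j ∈ P.support, ((P.coeff j * X ^ j).coeff k) * t ^ j := by
    funext t; rw [ha t, hb t]
  rw [hfun]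
  have hder : HasDerivAt (fun t : ℝ => ∑ j ∈ P.support, ((P.coeff j * X ^ j).coeff k) * t ^ j)
      (∑ j ∈ P.support, ((P.coeff j * X ^ j).coeff k) * ((j : ℝ) * (0:ℝ) ^ (j - 1))) 0 := by
    refine HasDerivAt.fun_sum fun j _ => ?_
    exact (hasDerivAt_pow j (0:ℝ)).const_mul _
  rw [hder.deriv]
  have hsum : (∑ j ∈ P.support, ((P.coeff j * X ^ j).coeff k) * ((j : ℝ) * (0:ℝ) ^ (j - 1)))
      = (P.coeff 1 * X ^ 1).coeff k := by
    have h2 : ∀ j ∈ P.support, j ≠ 1 →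
        ((P.coeff j * X ^ j).coeff k) * ((j : ℝ) * (0:ℝ) ^ (j - 1)) = 0 := by
      intro j _ hj
      match j, hj with
      | 0, _ => simp
      | (jj+2), _ => simp [zero_pow]
    have h3 : 1 ∉ P.support →
        ((P.coeff 1 * X ^ 1).coeff k) * ((1 : ℝ) * (0:ℝ) ^ (1 - 1)) = 0 := by
      intro h1
      rw [Polynomial.notMem_support_iff.mp h1]
      simp
    rw [Finset.sum_eq_single 1 h2 (by simpa using h3)]
    norm_num
  rw [hsum, pow_one]
  obtain ⟨k', rfl⟩ : ∃ k', k = k' + 1 := ⟨k - 1, by omega⟩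
  rw [coeff_mul_X]
  simp

end AuxLemmas

/-- if `χ, χ̄ ∈ Γ_{s+1}` and `tr(χ̄·T̄_{0,s}(χ̄)·χ) ≥ (s/(n−1))·σ_s(χ̄)·tr(χ)`,
where `T̄_{0,s}(χ̄)` is the (unique symmetric) gradient of `σ_s` at `χ̄`, then
`(n−1−s)·σ_s(χ̄)·tr(χ) ≥ (n−1)·(s+1)·P_{1,s}(χ,χ̄)`. -/
theorem statement8 (n s : ℕ) (hn : 3 ≤ n) (hs1 : 1 ≤ s) (hs2 : s ≤ n - 2)
    (χ χb T : Matrix (Fin (n-1)) (Fin (n-1)) ℝ)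
    (hχ : χ.IsSymm) (hχb : χb.IsSymm) (hT : T.IsSymm)
    (hTgrad : ∀ H : Matrix (Fin (n-1)) (Fin (n-1)) ℝ, H.IsSymm →
      deriv (fun t : ℝ => sigmaM s (χb + t • H)) 0 = (T * H).trace)
    (hG : matGamma (s+1) χ) (hGb : matGamma (s+1) χb)
    (htr : (χb * T * χ).trace ≥ ((s : ℝ) / ((n : ℝ) - 1)) * sigmaM s χb * χ.trace) :
    ((n : ℝ) - 1 - (s : ℝ)) * sigmaM s χb * χ.trace ≥
      ((n : ℝ) - 1) * ((s : ℝ) + 1) * mixedP 1 s χ χb := by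
  classical
  open Polynomial in
  -- notation
  set g : Polynomial ℝ :=
    trace (χ.map (C : ℝ → Polynomial ℝ) * χb.map C
      * adjugate (1 + (X : Polynomial ℝ) • χb.map C)) with hg
  -- the symmetric direction H
  set H : Matrix (Fin (n-1)) (Fin (n-1)) ℝ := χ * χb + χb * χ with hH
  have hHsymm : H.IsSymm := by
    unfold Matrix.IsSymm
    rw [hH, Matrix.transpose_add, Matrix.transpose_mul, Matrix.transpose_mul,
      hχ.eq, hχb.eq, add_comm]
  -- trace identity: (T*H).trace = 2 * (χb*T*χ).trace
  have htrH : (T * H).trace = 2 * (χb * T * χ).trace := by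
    rw [hH, mul_add, trace_add]
    have tA : trace (T * (χ * χb)) = trace (χb * T * χ) := by
      rw [← mul_assoc, Matrix.trace_mul_cycle T χ χb]
    have tB : trace (T * (χb * χ)) = trace (χb * T * χ) := by
      have htp : (T * (χb * χ))ᵀ = (χ * χb) * T := by
        rw [Matrix.transpose_mul, Matrix.transpose_mul, hT.eq, hχ.eq, hχb.eq, mul_assoc]
      rw [← Matrix.trace_transpose (T * (χb * χ)), htp, Matrix.trace_mul_comm]
      exact tA
    rw [tA, tB, two_mul]
  -- combine hTgrad and keyB via deriv_sigmaM
  have hd := deriv_sigmaM s hs1 χb H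
  rw [hTgrad H hHsymm] at hd
  have hB := keyB (R := ℝ) χb χ
  rw [← hH] at hB
  rw [hB] at hd
  have hg1 : g.coeff (s-1) = (χb * T * χ).trace := by
    have h2 : (2 * g).coeff (s-1) = 2 * (χb * T * χ).trace := by
      rw [← hd, htrH]
    rw [two_mul, Polynomial.coeff_add, ← two_mul] at h2
    linarith
  -- the mixedP coefficient via keyA
  have hA := keyA (R := ℝ) χb χ
  -- identify the mixedP determinant matrix
  have hD : ((1 : Matrix (Fin (n-1)) (Fin (n-1)) (Polynomial (Polynomial ℝ)))
        + (Polynomial.X : Polynomial (Polynomial ℝ)) •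
            χ.map (fun a => Polynomial.C (Polynomial.C a))
        + (Polynomial.C Polynomial.X : Polynomial (Polynomial ℝ)) •
            χb.map (fun a => Polynomial.C (Polynomial.C a)))
      = ((1 + (X : Polynomial ℝ) • χb.map C).map (C : Polynomial ℝ → Polynomial (Polynomial ℝ))
        + (X : Polynomial (Polynomial ℝ)) • (χ.map (C : ℝ → Polynomial ℝ)).map C) := by
    refine Matrix.ext fun i j => ?_
    by_cases hij : i = j <;>
      simp only [Matrix.add_apply, Matrix.smul_apply, Matrix.map_apply, Matrix.one_apply, hij,
        if_true, if_false, smul_eq_mul, map_add, _root_.map_mul, _root_.map_one, map_zero] <;>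
      ring
  -- coefficient formula
  have hcoeff : ((((1 : Matrix (Fin (n-1)) (Fin (n-1)) (Polynomial (Polynomial ℝ)))
        + (Polynomial.X : Polynomial (Polynomial ℝ)) •
            χ.map (fun a => Polynomial.C (Polynomial.C a))
        + (Polynomial.C Polynomial.X : Polynomial (Polynomial ℝ)) •
            χb.map (fun a => Polynomial.C (Polynomial.C a))).det).coeff 1).coeff s
      = χ.trace * sigmaM s χb - (χb * T * χ).trace := by
    rw [hD, hA]
    rw [Polynomial.coeff_sub, Polynomial.coeff_C_mul]
    obtain ⟨s', rfl⟩ : ∃ s', s = s' + 1 := ⟨s - 1, by omega⟩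
    rw [Polynomial.coeff_X_mul]
    have hg1' : g.coeff s' = (χb * T * χ).trace := by simpa using hg1
    rw [hg1']
    rfl
  -- compute mixedP
  have hfac : ((Nat.factorial 1 * Nat.factorial s : ℝ) / (Nat.factorial (1 + s) : ℝ))
      = 1 / ((s : ℝ) + 1) := by
    rw [Nat.factorial_one, Nat.add_comm 1 s, Nat.factorial_succ]
    have hs0 : (Nat.factorial s : ℝ) ≠ 0 := by
      exact_mod_cast Nat.factorial_ne_zero s
    have hs1' : ((s : ℝ) + 1) ≠ 0 := by positivity
    push_cast
    field_simp
  have hmP : mixedP 1 s χ χb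
      = (1 / ((s : ℝ) + 1)) * (χ.trace * sigmaM s χb - (χb * T * χ).trace) := by
    unfold mixedP
    rw [hfac, hcoeff]
  -- final inequality
  set σ : ℝ := sigmaM s χb
  set τ : ℝ := χ.trace
  set β : ℝ := (χb * T * χ).trace
  set ν : ℝ := (n : ℝ) - 1 with hν
  have hνpos : (0:ℝ) < ν := by
    have : (3:ℝ) ≤ (n:ℝ) := by exact_mod_cast hn
    rw [hν]; linarith
  have hs1'' : ((s : ℝ) + 1) ≠ 0 := by positivity
  have hRHS : ν * ((s:ℝ) + 1) * mixedP 1 s χ χb = ν * (τ * σ - β) := by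
    rw [hmP]
    field_simp
  have hνβ : (s : ℝ) * (σ * τ) ≤ ν * β := by
    have h := mul_le_mul_of_nonneg_left htr hνpos.le
    have heq : ν * ((s:ℝ) / ν * σ * τ) = (s:ℝ) * (σ * τ) := by
      field_simp
    rw [heq] at h
    exact h
  have expand : (ν - (s:ℝ)) * σ * τ - ν * (τ * σ - β) = ν * β - (s:ℝ) * (σ * τ) := by ring
  rw [ge_iff_le, hRHS]
  linarith
end

section
/- Let n ≥ 3 and let s be an integer with 1 ≤ s ≤ n−2. If λ ∈ ℝ^{n−1} lies in the Gårding cone Γ_{s+1}, then (n−1)·Σ_{i=1}^{n−1} λ_i²·σ_{s−1}(λ|i) ≥ s·σ₁(λ)·σ_s(λ). -/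
open Matrix

/-- The `q`-th elementary symmetric polynomial of the entries of `lam` indexed by `S`. -/
noncomputable def esymmOn {m : ℕ} (S : Finset (Fin m)) (q : ℕ) (lam : Fin m → ℝ) : ℝ :=
  ∑ t ∈ S.powersetCard q, ∏ i ∈ t, lam i

/-- The Gårding cone `Γ_k` for vectors: `σ_1(λ) > 0, …, σ_k(λ) > 0`. -/
def gammaVec {m : ℕ} (k : ℕ) (lam : Fin m → ℝ) : Prop :=
  ∀ j : ℕ, 1 ≤ j → j ≤ k → 0 < esymmOn Finset.univ j lam

-- esymm basics
lemma esymm_cons (a : ℝ) (s : Multiset ℝ) (r : ℕ) :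
    (a ::ₘ s).esymm (r+1) = s.esymm (r+1) + a * s.esymm r := by
  rw [Multiset.esymm, Multiset.powersetCard_cons, Multiset.map_add, Multiset.sum_add,
    Multiset.map_map]
  congr 1
  rw [Multiset.esymm, ← Multiset.sum_map_mul_left]
  congr 1
  apply Multiset.map_congr rfl
  intro t _
  simp [Multiset.prod_cons]

lemma esymm_nonneg (s : Multiset ℝ) (h : ∀ x ∈ s, (0:ℝ) ≤ x) (r : ℕ) : 0 ≤ s.esymm r := by
  apply Multiset.sum_nonneg
  intro x hx
  obtain ⟨t, ht, rfl⟩ := Multiset.mem_map.1 hx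
  exact Multiset.prod_nonneg fun a ha =>
    h a (Multiset.mem_of_le (Multiset.mem_powersetCard.1 ht).1 ha)

lemma esymm_eq_zero_of_card_lt (s : Multiset ℝ) (r : ℕ) (h : Multiset.card s < r) :
    s.esymm r = 0 := by
  rw [Multiset.esymm, Multiset.powersetCard_eq_empty _ h]
  rfl

lemma esymmOn_eq {m : ℕ} (S : Finset (Fin m)) (q : ℕ) (lam : Fin m → ℝ) :
    esymmOn S q lam = (S.val.map lam).esymm q :=
  (Finset.esymm_map_val lam S q).symm

lemma esymmOn_erase {m : ℕ} (S : Finset (Fin m)) (i : Fin m) (hi : i ∈ S) (r : ℕ)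
    (lam : Fin m → ℝ) :
    esymmOn S (r+1) lam
      = esymmOn (S.erase i) (r+1) lam + lam i * esymmOn (S.erase i) r lam := by
  have hv : S.val = i ::ₘ (S.erase i).val := by
    rw [Finset.erase_val]
    exact (Multiset.cons_erase (by simpa using hi)).symm
  rw [esymmOn_eq, esymmOn_eq, esymmOn_eq, hv, Multiset.map_cons, esymm_cons]

lemma sum_mul_esymm_erase {m : ℕ} (lam : Fin m → ℝ) (r : ℕ) :
    ∑ i : Fin m, lam i * esymmOn (Finset.univ.erase i) r lam
      = ((r:ℝ)+1) * esymmOn Finset.univ (r+1) lam := by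
  classical
  unfold esymmOn
  rw [Finset.mul_sum]
  have hR : ∀ u ∈ Finset.univ.powersetCard (r+1),
      ((r:ℝ)+1) * ∏ j ∈ u, lam j = ∑ i ∈ u, lam i * ∏ j ∈ u.erase i, lam j := by
    intro u hu
    obtain ⟨-, hcard⟩ := Finset.mem_powersetCard.1 hu
    have : ∀ i ∈ u, lam i * ∏ j ∈ u.erase i, lam j = ∏ j ∈ u, lam j := fun i hi =>
      Finset.mul_prod_erase u lam hi
    rw [Finset.sum_congr rfl this, Finset.sum_const, hcard, nsmul_eq_mul]
    push_cast
    ring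
  rw [Finset.sum_congr rfl hR]
  simp_rw [Finset.mul_sum]
  rw [Finset.sum_sigma' Finset.univ (fun i => (Finset.univ.erase i).powersetCard r)
    (fun i t => lam i * ∏ j ∈ t, lam j),
    Finset.sum_sigma' (Finset.univ.powersetCard (r+1)) (fun u => u)
    (fun u i => lam i * ∏ j ∈ u.erase i, lam j)]
  refine Finset.sum_nbij' (fun x => ⟨insert x.1 x.2, x.1⟩) (fun y => ⟨y.2, y.1.erase y.2⟩)
    ?_ ?_ ?_ ?_ ?_
  · rintro ⟨i, t⟩ hx
    simp only [Finset.mem_sigma, Finset.mem_univ, true_and, Finset.mem_powersetCard] at hx ⊢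
    have hit : i ∉ t := fun h => (Finset.mem_erase.1 (hx.1 h)).1 rfl
    refine ⟨⟨Finset.subset_univ _, ?_⟩, Finset.mem_insert_self _ _⟩
    rw [Finset.card_insert_of_notMem hit, hx.2]
  · rintro ⟨u, i⟩ hy
    simp only [Finset.mem_sigma, Finset.mem_powersetCard] at hy ⊢
    refine ⟨Finset.mem_univ _, ?_, ?_⟩
    · exact fun j hj => Finset.mem_erase.2 ⟨(Finset.mem_erase.1 hj).1, Finset.mem_univ _⟩
    · rw [Finset.card_erase_of_mem hy.2, hy.1.2]
      omega
  · rintro ⟨i, t⟩ hx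
    simp only [Finset.mem_sigma, Finset.mem_univ, true_and, Finset.mem_powersetCard] at hx
    have hit : i ∉ t := fun h => (Finset.mem_erase.1 (hx.1 h)).1 rfl
    simp [Finset.erase_insert hit]
  · rintro ⟨u, i⟩ hy
    simp only [Finset.mem_sigma, Finset.mem_powersetCard] at hy
    simp [Finset.insert_erase hy.2]
  · rintro ⟨i, t⟩ hx
    simp only [Finset.mem_sigma, Finset.mem_univ, true_and, Finset.mem_powersetCard] at hx
    have hit : i ∉ t := fun h => (Finset.mem_erase.1 (hx.1 h)).1 rfl
    simp [Finset.erase_insert hit]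

lemma esymm_one_eq_sum (s : Multiset ℝ) : s.esymm 1 = s.sum := by
  rw [Multiset.esymm, Multiset.powersetCard_one, Multiset.map_map]
  simp

lemma esymmOn_one {m : ℕ} (lam : Fin m → ℝ) :
    esymmOn Finset.univ 1 lam = ∑ i : Fin m, lam i := by
  rw [esymmOn_eq, esymm_one_eq_sum]
  rfl

lemma key_identity {m : ℕ} (lam : Fin m → ℝ) (r : ℕ) :
    ∑ i : Fin m, lam i ^ 2 * esymmOn (Finset.univ.erase i) r lam
      = esymmOn Finset.univ 1 lam * esymmOn Finset.univ (r+1) lam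
        - ((r:ℝ)+2) * esymmOn Finset.univ (r+2) lam := by
  have h1 : ∀ i : Fin m, lam i * esymmOn Finset.univ (r+1) lam
      = lam i * esymmOn (Finset.univ.erase i) (r+1) lam
        + lam i ^ 2 * esymmOn (Finset.univ.erase i) r lam := by
    intro i
    rw [esymmOn_erase Finset.univ i (Finset.mem_univ i) r lam]
    ring
  have h2 := Finset.sum_congr rfl (fun i (_ : i ∈ Finset.univ) => h1 i)
  rw [Finset.sum_add_distrib, sum_mul_esymm_erase lam (r+1), ← Finset.sum_mul,
    ← esymmOn_one lam] at h2
  have hr2 : r + 1 + 1 = r + 2 := rfl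
  rw [hr2] at h2
  push_cast at h2
  linarith [h2]

open Polynomial in
lemma allPos (s : Multiset ℝ) (h : ∀ j, 1 ≤ j → j ≤ Multiset.card s → 0 < s.esymm j) :
    ∀ x ∈ s, (0:ℝ) < x := by
  intro x hx
  by_contra hx0
  push_neg at hx0
  set m := Multiset.card s with hm
  have hm1 : 1 ≤ m := by
    rw [hm]
    exact Multiset.card_pos_iff_exists_mem.2 ⟨x, hx⟩
  set f : ℝ[X] := (s.map fun r => X + C r).prod with hf
  have heval0 : f.eval (-x) = 0 := by
    rw [hf, eval_multiset_prod, Multiset.map_map]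
    apply Multiset.prod_eq_zero
    apply Multiset.mem_map.2
    exact ⟨x, hx, by simp⟩
  have hevalsum : f.eval (-x) =
      ∑ j ∈ Finset.range (m + 1), s.esymm j * (-x) ^ (m - j) := by
    rw [hf, Multiset.prod_X_add_C_eq_sum_esymm, eval_finset_sum]
    apply Finset.sum_congr rfl
    intro j _
    simp [hm]
  have hpos : 0 < ∑ j ∈ Finset.range (m + 1), s.esymm j * (-x) ^ (m - j) := by
    apply Finset.sum_pos'
    · intro j hj
      have hj' := Finset.mem_range.1 hj
      apply mul_nonneg
      · rcases Nat.eq_zero_or_pos j with h0 | h1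
        · subst h0; simp [Multiset.esymm]
        · exact (h j h1 (by omega)).le
      · exact pow_nonneg (by linarith) _
    · refine ⟨m, Finset.mem_range.2 (by omega), ?_⟩
      simp only [Nat.sub_self, pow_zero, mul_one]
      exact h m hm1 le_rfl
  rw [heval0] at hevalsum
  linarith

lemma amgm_aux {x y z : ℝ} (hx : 0 ≤ x) (hy : 0 ≤ y) (hz : 0 ≤ z) (h : z^2 ≤ x*y) :
    2*z ≤ x + y := by
  nlinarith [sq_nonneg (x-y), sq_nonneg (x+y-2*z), mul_nonneg hx hy, mul_nonneg hx hz,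
    mul_nonneg hy hz]

lemma baseC (s : Multiset ℝ) (hpos : ∀ x ∈ s, (0:ℝ) < x) :
    ((Multiset.card s : ℝ))^2 * s.esymm (Multiset.card s)
      ≤ s.esymm 1 * s.esymm (Multiset.card s - 1) := by
  induction s using Multiset.induction with
  | empty => simp [Multiset.esymm, Multiset.powersetCard_one]
  | cons a s ih =>
    have ha : (0:ℝ) < a := hpos a (Multiset.mem_cons_self a s)
    have hs : ∀ x ∈ s, (0:ℝ) < x := fun x hx => hpos x (Multiset.mem_cons_of_mem hx)
    have hnn : ∀ x ∈ s, (0:ℝ) ≤ x := fun x hx => (hs x hx).le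
    have ih' := ih hs
    rw [Multiset.card_cons]
    rcases Nat.eq_zero_or_pos (Multiset.card s) with h0 | h1
    · -- s has card 0, so s = 0
      have hs0 : s = 0 := Multiset.card_eq_zero.1 h0
      subst hs0
      simp [esymm_cons, Multiset.esymm, Multiset.powersetCard_zero_left]
    · obtain ⟨d, hd⟩ : ∃ d, Multiset.card s = d + 1 := ⟨Multiset.card s - 1, by omega⟩
      set c := Multiset.card s with hc
      have hsub1 : c + 1 - 1 = c := by omega
      have hsubc : c - 1 = d := by omega
      rw [hsub1]
      rw [hsubc] at ih'
      -- expand esymms of (a ::ₘ s)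
      have e_top : (a ::ₘ s).esymm (c + 1) = a * s.esymm c := by
        rw [esymm_cons, esymm_eq_zero_of_card_lt s (c+1) (by omega)]
        ring
      have e_one : (a ::ₘ s).esymm 1 = a + s.esymm 1 := by
        rw [esymm_one_eq_sum, esymm_one_eq_sum, Multiset.sum_cons]
      have e_c : (a ::ₘ s).esymm c = s.esymm c + a * s.esymm d := by
        rw [hd, esymm_cons]
      rw [e_top, e_one, e_c]
      have h1' : (0:ℝ) ≤ s.esymm 1 := esymm_nonneg s hnn 1
      have hcd : (0:ℝ) ≤ s.esymm d := esymm_nonneg s hnn d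
      have hcc : (0:ℝ) ≤ s.esymm c := esymm_nonneg s hnn c
      -- need: (c+1)^2 * (a * e_c) ≤ (a + e1) * (e_c + a * e_d)
      -- key : e1 * e_c + a^2 * e_d ≥ 2*c*a*e_c
      have key : 2*((c:ℝ)*a*(s.esymm c)) ≤ s.esymm 1 * s.esymm c + a^2 * s.esymm d := by
        apply amgm_aux (mul_nonneg h1' hcc) (mul_nonneg (sq_nonneg a) hcd)
          (by positivity)
        nlinarith [mul_le_mul_of_nonneg_left ih' (mul_nonneg (sq_nonneg a) hcc)]
      push_cast
      nlinarith [mul_le_mul_of_nonneg_left ih' ha.le]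

open Polynomial in
lemma deriv_step (s : Multiset ℝ) (m : ℕ) (hm : Multiset.card s = m) (hm1 : 1 ≤ m) :
    ∃ t : Multiset ℝ, Multiset.card t = m - 1 ∧
      ∀ r, r ≤ m - 1 → (m:ℝ) * t.esymm r = ((m - r : ℕ):ℝ) * s.esymm r := by
  set f : ℝ[X] := (s.map fun a => X + C a).prod with hf
  have hfalt : f = ((s.map (fun a => -a)).map fun a => X - C a).prod := by
    rw [hf, Multiset.map_map]
    congr 1
    apply Multiset.map_congr rfl
    intro a _
    simp [sub_neg_eq_add]
  have hmonic : f.Monic := by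
    apply monic_multiset_prod_of_monic
    intro a _
    exact monic_X_add_C a
  have hdeg : f.natDegree = m := by
    rw [hf, natDegree_multiset_prod_of_monic]
    · rw [Multiset.map_map]
      have : ∀ a ∈ s, (Polynomial.natDegree ∘ fun a => X + C a) a = 1 := by
        intro a _; simp [natDegree_X_add_C]
      rw [Multiset.map_congr rfl this, Multiset.map_const', Multiset.sum_replicate, hm,
        smul_eq_mul, mul_one]
    · intro p hp
      obtain ⟨a, _, rfl⟩ := Multiset.mem_map.1 hp
      exact monic_X_add_C a
  have hroots : f.roots = s.map (fun a => -a) := by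
    rw [hfalt, roots_multiset_prod_X_sub_C]
  have hrootscard : Multiset.card f.roots = m := by rw [hroots, Multiset.card_map, hm]
  set g : ℝ[X] := derivative f with hg
  have hgcoeff : g.coeff (m-1) = (m:ℝ) := by
    rw [hg, coeff_derivative]
    have h1 : m - 1 + 1 = m := by omega
    rw [h1]
    have h2 : f.coeff m = 1 := by rw [← hdeg]; exact hmonic.coeff_natDegree
    rw [h2, one_mul, ← h1]
    push_cast
    ring
  have hgne : g ≠ 0 := by
    intro h
    rw [h, coeff_zero] at hgcoeff
    have : (m:ℝ) ≠ 0 := by positivity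
    exact this hgcoeff.symm
  have hgdeg : g.natDegree = m - 1 := by
    refine le_antisymm ?_ (le_natDegree_of_ne_zero (by rw [hgcoeff]; positivity))
    calc g.natDegree ≤ f.natDegree - 1 := natDegree_derivative_le f
    _ = m - 1 := by rw [hdeg]
  have hgroots : Multiset.card g.roots = m - 1 := by
    refine le_antisymm (le_trans (card_roots' g) hgdeg.le) ?_
    have := card_roots_le_derivative f
    rw [hrootscard, ← hg] at this
    omega
  have hgsplits : Splits g := splits_iff_card_roots.mpr (by rw [hgroots, hgdeg])
  have hglead : g.leadingCoeff = (m:ℝ) := by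
    rw [leadingCoeff, hgdeg, hgcoeff]
  set t : Multiset ℝ := g.roots.map (fun a => -a) with ht
  have htcard : Multiset.card t = m - 1 := by rw [ht, Multiset.card_map, hgroots]
  refine ⟨t, htcard, ?_⟩
  intro r hr
  have hgfact : g = C (m:ℝ) * (t.map fun a => X + C a).prod := by
    conv_lhs => rw [hgsplits.eq_prod_roots]
    rw [hglead, ht, Multiset.map_map]
    refine congr_arg _ (congr_arg Multiset.prod ?_)
    apply Multiset.map_congr rfl
    intro a _
    simp [sub_eq_add_neg]
  -- coefficient at m - 1 - r, two ways
  have way1 : g.coeff (m - 1 - r) = ((m - r : ℕ):ℝ) * s.esymm r := by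
    rw [hg, coeff_derivative]
    have h1 : m - 1 - r + 1 = m - r := by omega
    rw [h1]
    have h2 : m - r ≤ Multiset.card s := by omega
    rw [hf, Multiset.prod_X_add_C_coeff s h2, hm]
    have h3 : m - (m - r) = r := by omega
    rw [h3]
    have h4 : ((m - r : ℕ):ℝ) = ((m - 1 - r : ℕ):ℝ) + 1 := by
      rw [← h1]
      push_cast
      ring
    rw [h4]
    ring
  have way2 : g.coeff (m - 1 - r) = (m:ℝ) * t.esymm r := by
    rw [hgfact, coeff_C_mul]
    have h2 : m - 1 - r ≤ Multiset.card t := by omega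
    rw [Multiset.prod_X_add_C_coeff t h2, htcard]
    have h3 : m - 1 - (m - 1 - r) = r := by omega
    rw [h3]
  rw [← way1, ← way2]

lemma MI : ∀ (m : ℕ) (s : Multiset ℝ), Multiset.card s = m → ∀ k : ℕ, 1 ≤ k → k + 1 ≤ m →
    (∀ j, 1 ≤ j → j ≤ k + 1 → 0 < s.esymm j) →
    (m : ℝ) * ((k:ℝ)+1) * s.esymm (k+1) ≤ ((m : ℝ) - k) * (s.esymm 1 * s.esymm k) := by
  intro m
  induction m with
  | zero => intro s _ k hk1 hk2 _; omega
  | succ m ih =>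
    intro s hcard k hk1 hk2 hpos
    rcases eq_or_lt_of_le hk2 with heq | hlt
    · -- base case : k = m
      have hk : k = m := by omega
      subst hk
      have hentries : ∀ x ∈ s, (0:ℝ) < x := by
        apply allPos
        intro j hj1 hj2
        exact hpos j hj1 (by omega)
      have hb := baseC s hentries
      rw [hcard] at hb
      have hsb : k + 1 - 1 = k := rfl
      rw [hsb] at hb
      push_cast at hb ⊢
      nlinarith [hb]
    · -- inductive step : k + 1 ≤ m
      obtain ⟨t, htcard, hrel⟩ := deriv_step s (m+1) hcard (by omega)
      have hsub : m + 1 - 1 = m := rfl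
      rw [hsub] at htcard
      have hkm : k ≤ m := by omega
      have hkm1 : k + 1 ≤ m := by omega
      set M : ℝ := ((m+1 : ℕ) : ℝ) with hMdef
      have hM : (0:ℝ) < M := by positivity
      -- cast lemmas
      have c1 : ((m + 1 - 1 : ℕ):ℝ) = M - 1 := by rw [hsub]; rw [hMdef]; push_cast; ring
      have ck : ((m + 1 - k : ℕ):ℝ) = M - k := by
        rw [hMdef]; push_cast [Nat.cast_sub (by omega : k ≤ m + 1)]; ring
      have ck1 : ((m + 1 - (k+1) : ℕ):ℝ) = M - k - 1 := by
        rw [hMdef]; push_cast [Nat.cast_sub (by omega : k + 1 ≤ m + 1),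
          Nat.cast_sub (by omega : k ≤ m)]; ring
      have e1 := hrel 1 (by omega)
      have ek := hrel k (by omega)
      have ek1 := hrel (k+1) (by omega)
      rw [c1] at e1
      rw [ck] at ek
      rw [ck1] at ek1
      have hMm : M - 1 = (m:ℝ) := by rw [hMdef]; push_cast; ring
      have htpos : ∀ j, 1 ≤ j → j ≤ k + 1 → 0 < t.esymm j := by
        intro j hj1 hj2
        have hrj := hrel j (by omega)
        have hcj : (0:ℝ) < ((m + 1 - j : ℕ):ℝ) := by
          have : 1 ≤ m + 1 - j := by omega
          exact_mod_cast Nat.pos_of_ne_zero (by omega)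
        have hsj := hpos j hj1 hj2
        nlinarith [hrj, hcj, hsj, hM]
      have hIH := ih t htcard k hk1 hkm1 htpos
      -- hIH : (m:ℝ)*(k+1)*t_{k+1} ≤ ((m:ℝ)-k)*(t1*tk)
      have hM2 : (0:ℝ) ≤ M^2 := sq_nonneg M
      have H2 := mul_le_mul_of_nonneg_left hIH hM2
      have hmk : (0:ℝ) < (m:ℝ) - k := by
        have : (k:ℝ) < (m:ℝ) := by exact_mod_cast hkm1
        linarith
      have hm0 : (0:ℝ) < (m:ℝ) := by
        have : 1 ≤ m := by omega
        exact_mod_cast Nat.pos_of_ne_zero (by omega)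
      have A : M^2 * ((m:ℝ)*((k:ℝ)+1)*t.esymm (k+1))
          = (m:ℝ)*((m:ℝ)-k)*(M*((k:ℝ)+1)*s.esymm (k+1)) := by
        have h1 : M^2 * ((m:ℝ)*((k:ℝ)+1)*t.esymm (k+1))
            = (m:ℝ)*((k:ℝ)+1)*M*(M*t.esymm (k+1)) := by ring
        rw [h1, ek1]
        have hMk : M - k - 1 = (m:ℝ) - k := by rw [hMdef]; push_cast; ring
        rw [hMk]
        ring
      have B : M^2 * (((m:ℝ)-(k:ℝ))*(t.esymm 1*t.esymm k))
          = (m:ℝ)*((m:ℝ)-k)*((M-k)*(s.esymm 1*s.esymm k)) := by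
        have h1 : M^2 * (((m:ℝ)-(k:ℝ))*(t.esymm 1*t.esymm k))
            = ((m:ℝ)-(k:ℝ))*((M*t.esymm 1)*(M*t.esymm k)) := by ring
        rw [h1, e1, ek, hMm]
        ring
      have H3 : ((m:ℝ)*((m:ℝ)-k)) * (M*((k:ℝ)+1)*s.esymm (k+1))
          ≤ ((m:ℝ)*((m:ℝ)-k)) * ((M-k)*(s.esymm 1*s.esymm k)) := by
        calc ((m:ℝ)*((m:ℝ)-k)) * (M*((k:ℝ)+1)*s.esymm (k+1))
            = M^2 * ((m:ℝ)*((k:ℝ)+1)*t.esymm (k+1)) := by rw [A]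
          _ ≤ M^2 * (((m:ℝ)-(k:ℝ))*(t.esymm 1*t.esymm k)) := H2
          _ = ((m:ℝ)*((m:ℝ)-k)) * ((M-k)*(s.esymm 1*s.esymm k)) := by rw [B]
      have := le_of_mul_le_mul_left H3 (mul_pos hm0 hmk)
      convert this using 2 <;> rw [hMdef] <;> push_cast <;> ring

/-- if `λ ∈ Γ_{s+1}`, then
`(n−1)·Σ_i λ_i²·σ_{s−1}(λ|i) ≥ s·σ₁(λ)·σ_s(λ)`. -/
theorem statement9 (n s : ℕ) (hn : 3 ≤ n) (hs1 : 1 ≤ s) (hs2 : s ≤ n - 2)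
    (lam : Fin (n-1) → ℝ) (hlam : gammaVec (s+1) lam) :
    ((n : ℝ) - 1) * ∑ i : Fin (n-1), lam i ^ 2 * esymmOn (Finset.univ.erase i) (s-1) lam ≥
      (s : ℝ) * esymmOn Finset.univ 1 lam * esymmOn Finset.univ s lam := by
  have hs' : s - 1 + 1 = s := by omega
  have hs'' : s - 1 + 2 = s + 1 := by omega
  have hkey := key_identity lam (s-1)
  rw [hs', hs''] at hkey
  -- multiset version
  set ms : Multiset ℝ := (Finset.univ : Finset (Fin (n-1))).val.map lam with hms
  have hcard : Multiset.card ms = n - 1 := by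
    rw [hms, Multiset.card_map]
    simp
  have hpos : ∀ j, 1 ≤ j → j ≤ s + 1 → 0 < ms.esymm j := by
    intro j hj1 hj2
    have := hlam j hj1 hj2
    rwa [esymmOn_eq] at this
  have hMI := MI (n-1) ms hcard s hs1 (by omega) hpos
  rw [← esymmOn_eq, ← esymmOn_eq, ← esymmOn_eq] at hMI
  have hcast : ((n - 1 : ℕ):ℝ) = (n:ℝ) - 1 := by
    push_cast [Nat.cast_sub (by omega : 1 ≤ n)]
    ring
  rw [hcast] at hMI
  have hscast : ((s - 1 : ℕ):ℝ) + 2 = (s:ℝ) + 1 := by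
    push_cast [Nat.cast_sub (by omega : 1 ≤ s)]
    ring
  rw [hscast] at hkey
  rw [ge_iff_le, hkey]
  nlinarith [hMI]
end

section
/- Let n ≥ 1. On V = ℝ × ℝⁿ define, at each point p = (t,x), the alternating bilinear form Q_p(Y,Z) = (x·Yₓ)·Z₀ − (x·Zₓ)·Y₀ for Y = (Y₀,Yₓ), Z = (Z₀,Zₓ) ∈ ℝ × ℝⁿ (this is the two-form r dr ∧ dt on Minkowski spacetime), let η(X,Y) = −X₀·Y₀ + Xₓ·Yₓ be the Minkowski inner product, and set ξ = (−n, 0). Then: (i) for every p ∈ V and all X, Y, Z ∈ ℝ × ℝⁿ, the conformal Killing–Yano equation holds: (D_X Q)_p(Y,Z) + (D_Y Q)_p(X,Z) = (2/n)·( η(X,Y)·η(ξ,Z) − (1/2)·η(X,Z)·η(ξ,Y) − (1/2)·η(Y,Z)·η(ξ,X) ), where (D_X Q)_p(Y,Z) denotes the directional derivative at p, in the direction X, of the function p ↦ Q_p(Y,Z); and (ii) the divergence of Q equals ξ, i.e. for every p and every Z, −(D_{e₀}Q)_p(e₀, Z) + Σ_{i=1}^{n} (D_{e_i}Q)_p(e_i,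 Z) = η(ξ, Z), where e₀ = (1,0) and e₁,…,e_n = (0, standard basis of ℝⁿ). -/
open Matrix

/-- The Minkowski inner product on `ℝ × ℝⁿ`: `η(X,Y) = −X₀·Y₀ + Xₓ·Yₓ`. -/
noncomputable def mink {n : ℕ} (X Y : ℝ × (Fin n → ℝ)) : ℝ :=
  -(X.1 * Y.1) + X.2 ⬝ᵥ Y.2

/-- The two-form `Q = r dr ∧ dt` on Minkowski spacetime, at the point `p = (t,x)`:
`Q_p(Y,Z) = (x·Yₓ)·Z₀ − (x·Zₓ)·Y₀`. -/
noncomputable def Qform {n : ℕ} (p Y Z : ℝ × (Fin n → ℝ)) : ℝ :=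
  (p.2 ⬝ᵥ Y.2) * Z.1 - (p.2 ⬝ᵥ Z.2) * Y.1

/-- The covariant derivative `(D_X Q)_p(Y,Z)`: the directional derivative at `p` in the
direction `X` of `p ↦ Q_p(Y,Z)` (the flat connection on Minkowski space). -/
noncomputable def DQ {n : ℕ} (X p Y Z : ℝ × (Fin n → ℝ)) : ℝ :=
  deriv (fun u : ℝ => Qform (p + u • X) Y Z) 0

set_option linter.unnecessarySimpa false in
lemma DQ_eq {n : ℕ} (X p Y Z : ℝ × (Fin n → ℝ)) :
    DQ X p Y Z = (X.2 ⬝ᵥ Y.2) * Z.1 - (X.2 ⬝ᵥ Z.2) * Y.1 := by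
  unfold DQ Qform
  have h : (fun u : ℝ => ((p + u • X).2 ⬝ᵥ Y.2) * Z.1 - ((p + u • X).2 ⬝ᵥ Z.2) * Y.1)
      = fun u : ℝ => u * ((X.2 ⬝ᵥ Y.2) * Z.1 - (X.2 ⬝ᵥ Z.2) * Y.1)
          + ((p.2 ⬝ᵥ Y.2) * Z.1 - (p.2 ⬝ᵥ Z.2) * Y.1) := by
    funext u
    simp [add_dotProduct, smul_dotProduct, smul_eq_mul]
    ring
  rw [h]
  have := (((hasDerivAt_id (0 : ℝ)).mul_const
      ((X.2 ⬝ᵥ Y.2) * Z.1 - (X.2 ⬝ᵥ Z.2) * Y.1)).add_const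
      ((p.2 ⬝ᵥ Y.2) * Z.1 - (p.2 ⬝ᵥ Z.2) * Y.1)).deriv
  simpa using this

/-- `Q = r dr ∧ dt` is a conformal Killing–Yano two-form on `(n+1)`-dimensional
Minkowski spacetime, with `div Q = ξ = (−n, 0)`. -/
theorem statement14 (n : ℕ) (hn : 1 ≤ n) :
    (∀ p X Y Z : ℝ × (Fin n → ℝ),
      DQ X p Y Z + DQ Y p X Z =
        (2 / (n : ℝ)) *
          (mink X Y * mink ((-(n : ℝ), 0)) Z
            - (1/2) * mink X Z * mink ((-(n : ℝ), 0)) Y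
            - (1/2) * mink Y Z * mink ((-(n : ℝ), 0)) X)) ∧
    (∀ p Z : ℝ × (Fin n → ℝ),
      -(DQ ((1 : ℝ), (0 : Fin n → ℝ)) p ((1 : ℝ), (0 : Fin n → ℝ)) Z)
          + ∑ i : Fin n,
              DQ ((0 : ℝ), Pi.single i (1 : ℝ)) p ((0 : ℝ), Pi.single i (1 : ℝ)) Z =
        mink ((-(n : ℝ), 0)) Z) := by
  have hn' : (n : ℝ) ≠ 0 := by positivity
  constructor
  · intro p X Y Z
    simp only [DQ_eq, mink, zero_dotProduct, dotProduct_zero]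
    rw [dotProduct_comm Y.2 X.2]
    field_simp
    ring
  · intro p Z
    simp only [DQ_eq, mink, zero_dotProduct, dotProduct_zero, Pi.single_apply,
      single_dotProduct, dotProduct_single]
    simp [Finset.sum_add_distrib, mul_comm]
end

section
/- Let n ≥ 2, let 1 ≤ k ≤ n−1, and let W¹,…,W^k be real symmetric (n−1)×(n−1) matrices. Then the two definitions of the complete polarization of σ_k agree: C(n−1,k)·(1/(n−1)!)·[the coefficient of the monomial t₁t₂⋯t_{n−1} in the polynomial det(t₁·W¹ + ⋯ + t_k·W^k + (t_{k+1} + ⋯ + t_{n−1})·I) in t₁,…,t_{n−1}] = (1/k!)·[the coefficient of the monomial t₁t₂⋯t_k in the polynomial σ_k(t₁·W¹ + ⋯ + t_k·W^k) in t₁,…,t_k]. -/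
open Matrix

/-- The complete polarization `σ_{(k)}(W¹, …, W^k)`: `(1/k!)` times the coefficient of
the monomial `t₁ t₂ ⋯ t_k` in `σ_k (t₁ • W¹ + ⋯ + t_k • W^k)`. -/
noncomputable def polarMat {m k : ℕ} (W : Fin k → Matrix (Fin m) (Fin m) ℝ) : ℝ :=
  (1 / (Nat.factorial k : ℝ)) *
    MvPolynomial.coeff (∑ i : Fin k, Finsupp.single i 1)
      (sigmaM k (∑ i : Fin k,
        (MvPolynomial.X i : MvPolynomial (Fin k) ℝ) • (W i).map MvPolynomial.C))

set_option maxHeartbeats 1000000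

lemma st16_sigmaM_eq_charpoly_coeff {R : Type*} [CommRing R] [Nontrivial R] {m : ℕ}
    (M : Matrix (Fin m) (Fin m) R) (j : ℕ) (hj : j ≤ m) :
    sigmaM j M = ((-M).charpoly).coeff (m - j) := by
  have h1 : (-M).charpolyRev = (1 + (Polynomial.X : Polynomial R) • M.map Polynomial.C).det := by
    unfold Matrix.charpolyRev
    congr 1
    ext i j
    simp [Matrix.map_apply, sub_eq_add_neg, mul_neg]
  rw [sigmaM, ← h1, ← Matrix.reverse_charpoly, Polynomial.coeff_reverse,
    Matrix.charpoly_natDegree_eq_dim, Fintype.card_fin, Polynomial.revAt_le hj]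

lemma st16_eval_charpoly {R : Type*} [CommRing R] {m : ℕ} (A : Matrix (Fin m) (Fin m) R) (s : R) :
    Polynomial.eval s A.charpoly = Matrix.det (s • (1 : Matrix (Fin m) (Fin m) R) - A) := by
  rw [Matrix.charpoly, ← Polynomial.coe_evalRingHom, RingHom.map_det]
  congr 1
  ext i j
  by_cases h : i = j
  · subst h; simp [Matrix.charmatrix_apply_eq, Matrix.one_apply]
  · simp [Matrix.charmatrix_apply_ne _ _ _ h, Matrix.one_apply, h]

lemma st16_sum_single_apply {σ : Type*} [DecidableEq σ] (V : Finset σ) (c : σ → ℕ) (i : σ) :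
    (∑ j ∈ V, Finsupp.single j (c j)) i = if i ∈ V then c i else 0 := by
  rw [Finset.sum_apply']
  simp_rw [Finsupp.single_apply]
  exact Finset.sum_ite_eq' V i c

lemma st16_prod_X_pow {σ : Type*} (U : Finset σ) (d : σ → ℕ) :
    ∏ i ∈ U, (MvPolynomial.X i : MvPolynomial σ ℝ) ^ d i
      = MvPolynomial.monomial (∑ i ∈ U, Finsupp.single i (d i)) 1 := by
  classical
  induction U using Finset.cons_induction with
  | empty => simp
  | cons a s ha ih =>
      rw [Finset.prod_cons, Finset.sum_cons, ih, MvPolynomial.X_pow_eq_monomial,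
        MvPolynomial.monomial_mul, one_mul]

lemma st16_coeff_sum_X_pow {σ : Type*} [DecidableEq σ] (U : Finset σ) (j : ℕ) :
    MvPolynomial.coeff (∑ i ∈ U, Finsupp.single i 1)
        ((∑ i ∈ U, (MvPolynomial.X i : MvPolynomial σ ℝ)) ^ j)
      = if j = U.card then ((U.card).factorial : ℝ) else 0 := by
  classical
  rw [Finset.sum_pow_eq_sum_piAntidiag, MvPolynomial.coeff_sum]
  have key : ∀ d : σ → ℕ,
      MvPolynomial.coeff (∑ i ∈ U, Finsupp.single i 1)
        ((Nat.multinomial U d : MvPolynomial σ ℝ) * ∏ i ∈ U, MvPolynomial.X i ^ d i)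
      = if (∑ i ∈ U, Finsupp.single i (d i)) = (∑ i ∈ U, Finsupp.single i 1)
          then (Nat.multinomial U d : ℝ) else 0 := by
    intro d
    rw [st16_prod_X_pow, ← nsmul_eq_mul, MvPolynomial.coeff_smul,
      MvPolynomial.coeff_monomial]
    split <;> simp
  simp_rw [key]
  have hmono : ∀ d ∈ Finset.piAntidiag U j,
      ((∑ i ∈ U, Finsupp.single i (d i)) = (∑ i ∈ U, Finsupp.single i 1)
        ↔ ∀ i ∈ U, d i = 1) := by
    intro d hd
    constructor
    · intro h i hi
      have := DFunLike.congr_fun h i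
      rw [st16_sum_single_apply, st16_sum_single_apply, if_pos hi, if_pos hi] at this
      exact this
    · intro h
      exact Finset.sum_congr rfl fun i hi => by rw [h i hi]
  by_cases hj : j = U.card
  · subst hj
    rw [if_pos rfl]
    have hd0sum : (∑ i ∈ U, (fun i => if i ∈ U then 1 else 0) i) = U.card := by
      rw [show (∑ i ∈ U, (fun i => if i ∈ U then 1 else 0) i) = ∑ i ∈ U, 1 from
        Finset.sum_congr rfl fun i hi => by simp [hi]]
      simp
    rw [Finset.sum_eq_single_of_mem (fun i => if i ∈ U then 1 else 0)]
    · rw [if_pos (Finset.sum_congr rfl fun i hi => by simp [hi])]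
      have hspec := Nat.multinomial_spec (s := U) (f := fun i => if i ∈ U then 1 else 0)
      have h1 : (∏ i ∈ U, ((fun i => if i ∈ U then 1 else 0) i).factorial) = 1 :=
        Finset.prod_eq_one fun i hi => by simp [hi]
      rw [h1, one_mul, hd0sum] at hspec
      rw [hspec]
    · rw [Finset.mem_piAntidiag]
      refine ⟨hd0sum, fun i hi => ?_⟩
      by_contra hmem; exact hi (by simp [hmem])
    · intro d hd hne
      rw [if_neg]
      intro hcontr
      apply hne
      have hall := (hmono d hd).1 hcontr
      funext i
      by_cases hi : i ∈ U
      · rw [hall i hi, if_pos hi]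
      · rw [if_neg hi]
        by_contra h
        exact hi ((Finset.mem_piAntidiag.1 hd).2 i h)
  · rw [if_neg hj]
    apply Finset.sum_eq_zero
    intro d hd
    rw [if_neg]
    intro hcontr
    apply hj
    have hall := (hmono d hd).1 hcontr
    have := (Finset.mem_piAntidiag.1 hd).1
    rw [Finset.sum_congr rfl hall] at this
    simpa using this.symm
lemma st16_image_castLE {k m : ℕ} (hkm : k ≤ m) :
    Finset.univ.filter (fun i : Fin m => (i : ℕ) < k)
      = Finset.univ.image (Fin.castLE hkm) := by
  ext i
  simp only [Finset.mem_filter, Finset.mem_univ, true_and, Finset.mem_image]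
  constructor
  · intro h; exact ⟨⟨(i : ℕ), h⟩, by ext; rfl⟩
  · rintro ⟨j, -, rfl⟩; exact j.isLt

lemma st16_coeff_mul_of_rename {k m : ℕ} (hkm : k ≤ m) (u : MvPolynomial (Fin k) ℝ)
    (v : MvPolynomial (Fin m) ℝ)
    (hv : ∀ b ∈ v.support, ∀ i ∈ b.support, k ≤ (i : ℕ)) :
    MvPolynomial.coeff (∑ i : Fin m, Finsupp.single i 1)
        (MvPolynomial.rename (Fin.castLE hkm) u * v)
      = MvPolynomial.coeff (∑ i : Fin k, Finsupp.single i 1) u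
        * MvPolynomial.coeff
            (∑ i ∈ Finset.univ.filter (fun i : Fin m => ¬ (i : ℕ) < k), Finsupp.single i 1) v := by
  classical
  set g : Fin k → Fin m := Fin.castLE hkm with hg
  have hginj : Function.Injective g := Fin.castLE_injective hkm
  set μ₁ : Fin m →₀ ℕ := ∑ i ∈ Finset.univ.filter (fun i : Fin m => (i : ℕ) < k),
    Finsupp.single i 1 with hμ₁
  set μ₂ : Fin m →₀ ℕ := ∑ i ∈ Finset.univ.filter (fun i : Fin m => ¬ (i : ℕ) < k),
    Finsupp.single i 1 with hμ₂
  have hsplit : μ₁ + μ₂ = ∑ i : Fin m, Finsupp.single i 1 :=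
    Finset.sum_filter_add_sum_filter_not Finset.univ _ _
  have hμ₁app : ∀ i : Fin m, μ₁ i = if (i : ℕ) < k then 1 else 0 := by
    intro i; rw [hμ₁, st16_sum_single_apply]; simp
  have hμ₂app : ∀ i : Fin m, μ₂ i = if (i : ℕ) < k then 0 else 1 := by
    intro i; rw [hμ₂, st16_sum_single_apply]
    by_cases h : (i : ℕ) < k <;> simp [h]
  have hren : MvPolynomial.coeff μ₁ (MvPolynomial.rename g u)
      = MvPolynomial.coeff (∑ i : Fin k, Finsupp.single i 1) u := by
    have hmap : Finsupp.mapDomain g (∑ i : Fin k, Finsupp.single i 1) = μ₁ := by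
      rw [← Finsupp.mapDomain.addMonoidHom_apply, map_sum]
      simp only [Finsupp.mapDomain.addMonoidHom_apply, Finsupp.mapDomain_single]
      rw [hμ₁, st16_image_castLE hkm, Finset.sum_image
        (fun a _ b _ h => hginj h)]
    rw [← hmap, MvPolynomial.coeff_rename_mapDomain g hginj]
  rw [← hsplit, MvPolynomial.coeff_mul, Finset.sum_eq_single (μ₁, μ₂)]
  · rw [hren]
  · rintro ⟨a, b⟩ hab hne
    rw [Finset.HasAntidiagonal.mem_antidiagonal] at hab
    by_contra hprod
    have h1 : MvPolynomial.coeff a (MvPolynomial.rename g u) ≠ 0 :=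
      left_ne_zero_of_mul hprod
    have h2 : MvPolynomial.coeff b v ≠ 0 := right_ne_zero_of_mul hprod
    obtain ⟨d, hd, -⟩ := MvPolynomial.coeff_rename_ne_zero g u a h1
    have ha_out : ∀ i : Fin m, ¬ ((i : ℕ) < k) → a i = 0 := by
      intro i hi
      rw [← hd]
      apply Finsupp.mapDomain_notin_range
      rintro ⟨j, rfl⟩
      exact hi j.isLt
    have hb_out : ∀ i : Fin m, (i : ℕ) < k → b i = 0 := by
      intro i hi
      by_contra hbi
      have : i ∈ b.support := Finsupp.mem_support_iff.2 hbi
      have := hv b (MvPolynomial.mem_support_iff.2 h2) i this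
      omega
    have habi : ∀ i : Fin m, a i + b i = μ₁ i + μ₂ i := by
      intro i
      have := DFunLike.congr_fun hab i
      simpa [Finsupp.add_apply] using this
    have haμ : a = μ₁ := by
      ext i
      rcases lt_or_ge (i : ℕ) k with h | h
      · have := habi i
        rw [hb_out i h, hμ₁app, hμ₂app] at *
        simp [h] at this ⊢; omega
      · rw [ha_out i (not_lt.2 h), hμ₁app]
        simp [not_lt.2 h, h]
    have hbμ : b = μ₂ := by
      have := hab
      rw [haμ] at this
      exact add_left_cancel this
    exact hne (by rw [haμ, hbμ])
  · intro h
    exfalso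
    apply h
    rw [Finset.HasAntidiagonal.mem_antidiagonal]

/-- the two definitions of the complete polarization of `σ_k` agree:
`C(n−1,k)·(1/(n−1)!)` times the coefficient of `t₁⋯t_{n−1}` in
`det(t₁W¹ + ⋯ + t_kW^k + (t_{k+1}+⋯+t_{n−1})I)` equals `(1/k!)` times the coefficient
of `t₁⋯t_k` in `σ_k(t₁W¹ + ⋯ + t_kW^k)`. -/
theorem statement16 (n k : ℕ) (hn : 2 ≤ n) (hk1 : 1 ≤ k) (hk : k ≤ n - 1)
    (W : Fin k → Matrix (Fin (n-1)) (Fin (n-1)) ℝ) (hWs : ∀ i, (W i).IsSymm) :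
    ((n-1).choose k : ℝ) * (1 / ((n-1).factorial : ℝ)) *
      MvPolynomial.coeff (∑ i : Fin (n-1), Finsupp.single i 1)
        ((∑ i : Fin (n-1), (MvPolynomial.X i : MvPolynomial (Fin (n-1)) ℝ) •
            (if h : (i : ℕ) < k then (W ⟨(i : ℕ), h⟩).map MvPolynomial.C
             else (1 : Matrix (Fin (n-1)) (Fin (n-1)) (MvPolynomial (Fin (n-1)) ℝ)))).det)
      = polarMat W := by
  classical
  revert hk W hWs
  generalize n - 1 = m
  intro hk W hWs
  have hginj : Function.Injective (Fin.castLE hk) := Fin.castLE_injective hk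
  set MS : Matrix (Fin m) (Fin m) (MvPolynomial (Fin k) ℝ) :=
    ∑ i : Fin k, (MvPolynomial.X i : MvPolynomial (Fin k) ℝ) • (W i).map MvPolynomial.C
    with hMS
  set MR : Matrix (Fin m) (Fin m) (MvPolynomial (Fin m) ℝ) :=
    ∑ i : Fin k, (MvPolynomial.X (Fin.castLE hk i) : MvPolynomial (Fin m) ℝ) •
      (W i).map MvPolynomial.C
    with hMR
  set U : Finset (Fin m) := Finset.univ.filter (fun i : Fin m => ¬ (i : ℕ) < k) with hU
  set sU : MvPolynomial (Fin m) ℝ := ∑ i ∈ U, MvPolynomial.X i with hsU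
  have hUcard : U.card = m - k := by
    have hcompl : U = (Finset.univ.filter (fun i : Fin m => (i : ℕ) < k))ᶜ := by
      ext i; simp [hU]
    have h2 : (Finset.univ.filter (fun i : Fin m => (i : ℕ) < k)).card = k := by
      rw [st16_image_castLE hk, Finset.card_image_of_injective _ hginj, Finset.card_univ,
        Fintype.card_fin]
    rw [hcompl, Finset.card_compl, h2, Fintype.card_fin]
  -- Step A : rewrite the matrix
  have stepA : (∑ i : Fin m, (MvPolynomial.X i : MvPolynomial (Fin m) ℝ) •
      (if h : (i : ℕ) < k then (W ⟨(i : ℕ), h⟩).map MvPolynomial.C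
       else (1 : Matrix (Fin m) (Fin m) (MvPolynomial (Fin m) ℝ)))) = MR + sU • 1 := by
    have h1 : ∀ i : Fin m, (MvPolynomial.X i : MvPolynomial (Fin m) ℝ) •
        (if h : (i : ℕ) < k then (W ⟨(i : ℕ), h⟩).map MvPolynomial.C
         else (1 : Matrix (Fin m) (Fin m) (MvPolynomial (Fin m) ℝ)))
        = (if h : (i : ℕ) < k then
            (MvPolynomial.X i : MvPolynomial (Fin m) ℝ) • (W ⟨(i : ℕ), h⟩).map MvPolynomial.C
           else 0)
          + (if (i : ℕ) < k then 0 else (MvPolynomial.X i : MvPolynomial (Fin m) ℝ)) •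
            (1 : Matrix (Fin m) (Fin m) (MvPolynomial (Fin m) ℝ)) := by
      intro i; by_cases h : (i : ℕ) < k <;> simp [h]
    rw [Finset.sum_congr rfl fun i _ => h1 i, Finset.sum_add_distrib]
    congr 1
    · rw [← Finset.sum_subset
        (Finset.subset_univ (Finset.univ.filter (fun i : Fin m => (i : ℕ) < k)))
        (fun i _ hi => by
          rw [dif_neg]
          intro hc
          exact hi (Finset.mem_filter.2 ⟨Finset.mem_univ _, hc⟩))]
      rw [st16_image_castLE hk, Finset.sum_image (fun a _ b _ h => hginj h), hMR]
      apply Finset.sum_congr rfl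
      intro j _
      rw [dif_pos (show ((Fin.castLE hk j : ℕ) < k) from j.isLt)]
      congr 1
    · rw [← Finset.sum_smul]
      congr 1
      rw [hsU, hU, Finset.sum_filter]
      apply Finset.sum_congr rfl
      intro i _
      by_cases h : (i : ℕ) < k <;> simp [h]
  rw [stepA]
  -- Step B : expand the determinant
  have hdeg : ((-MR).charpoly).natDegree = m := by
    rw [Matrix.charpoly_natDegree_eq_dim, Fintype.card_fin]
  have hdet : (MR + sU • 1).det
      = ∑ j ∈ Finset.range (m+1), ((-MR).charpoly).coeff j * sU ^ j := by
    have h1 : (MR + sU • 1).det = Polynomial.eval sU ((-MR).charpoly) := by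
      rw [st16_eval_charpoly, sub_neg_eq_add, add_comm]
    rw [h1, Polynomial.eval_eq_sum_range' (n := m + 1)
      (show ((-MR).charpoly).natDegree < m + 1 by rw [hdeg]; omega) sU]
  -- charpoly coefficients come from the small ring
  have hMRmap : MR = MS.map (MvPolynomial.rename (Fin.castLE hk)) := by
    ext i j
    simp [hMR, hMS, Matrix.map_apply, Matrix.sum_apply, Matrix.smul_apply, smul_eq_mul,
      MvPolynomial.rename_X, MvPolynomial.rename_C, map_sum, _root_.map_mul]
  have hcharmap : (-MR).charpoly
      = ((-MS).charpoly).map (MvPolynomial.rename (Fin.castLE hk)).toRingHom := by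
    rw [← Matrix.charpoly_map]
    congr 1
    rw [hMRmap]
    ext i j
    simp [Matrix.map_apply, Matrix.neg_apply, map_neg]
  have hcoeff : ∀ j : ℕ, ((-MR).charpoly).coeff j
      = MvPolynomial.rename (Fin.castLE hk) (((-MS).charpoly).coeff j) := by
    intro j
    rw [hcharmap, Polynomial.coeff_map]
    rfl
  -- support of sU ^ j
  have hvars : ∀ j : ℕ, ∀ b ∈ (sU ^ j).support, ∀ i ∈ b.support, k ≤ (i : ℕ) := by
    intro j b hb i hi
    have h1 : i ∈ (sU ^ j).vars := (MvPolynomial.mem_vars i).2 ⟨b, hb, hi⟩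
    have h2 : i ∈ sU.vars := MvPolynomial.vars_pow sU j h1
    rw [hsU] at h2
    have h3 := MvPolynomial.vars_sum_subset U
      (fun i => (MvPolynomial.X i : MvPolynomial (Fin m) ℝ)) h2
    rw [Finset.mem_biUnion] at h3
    obtain ⟨l, hl, hil⟩ := h3
    rw [MvPolynomial.vars_X, Finset.mem_singleton] at hil
    subst hil
    rw [hU, Finset.mem_filter] at hl
    omega
  -- main coefficient computation
  have hmain : MvPolynomial.coeff (∑ i : Fin m, Finsupp.single i 1) ((MR + sU • 1).det)
      = MvPolynomial.coeff (∑ i : Fin k, Finsupp.single i 1) (sigmaM k MS)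
        * ((m - k).factorial : ℝ) := by
    rw [hdet, MvPolynomial.coeff_sum]
    have hterm : ∀ j ∈ Finset.range (m+1),
        MvPolynomial.coeff (∑ i : Fin m, Finsupp.single i 1)
          (((-MR).charpoly).coeff j * sU ^ j)
        = MvPolynomial.coeff (∑ i : Fin k, Finsupp.single i 1) (((-MS).charpoly).coeff j)
          * (if j = m - k then ((m - k).factorial : ℝ) else 0) := by
      intro j _
      rw [hcoeff j, st16_coeff_mul_of_rename hk _ _ (hvars j)]
      congr 1
      rw [← hU, hsU, st16_coeff_sum_X_pow U j, hUcard]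
    rw [Finset.sum_congr rfl hterm]
    simp_rw [mul_ite, mul_zero]
    rw [Finset.sum_ite_eq' (Finset.range (m+1)) (m - k)]
    rw [if_pos (Finset.mem_range.2 (by omega))]
    rw [st16_sigmaM_eq_charpoly_coeff MS k hk]
  rw [hmain]
  -- final arithmetic
  unfold polarMat
  rw [← hMS]
  have hfac : ((m.choose k : ℝ)) * (k.factorial : ℝ) * ((m - k).factorial : ℝ)
      = (m.factorial : ℝ) := by
    have h := Nat.choose_mul_factorial_mul_factorial hk
    exact_mod_cast h
  have hm0 : (m.factorial : ℝ) ≠ 0 := Nat.cast_ne_zero.2 (Nat.factorial_ne_zero m)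
  have hk0 : (k.factorial : ℝ) ≠ 0 := Nat.cast_ne_zero.2 (Nat.factorial_ne_zero k)
  set c := MvPolynomial.coeff (∑ i : Fin k, Finsupp.single i 1) (sigmaM k MS) with hc
  field_simp
  linear_combination c * hfac
end
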